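/- Bias of the random-directions (RDSA) gradient estimate: let f : ℝ^d → ℝ be differentiable with L-Lipschitz gradient, let c > 0, and let μ be a Borel probability measure on ℝ^d with ∫ ⟨z, u⟩·z dμ(z) = u for every u ∈ ℝ^d and ∫ ‖z‖³ dμ(z) < ∞. Then for every x ∈ ℝ^d, ‖ ∫ ((f(x + c·z) − f(x))/c)·z dμ(z) − ∇f(x) ‖ ≤ (cL/2)·∫ ‖z‖³ dμ(z). -/

import Mathlib

set_option maxHeartbeats 1000000


open MeasureTheory
open scoped RealInnerProductSpace

lemma rdsa_taylor {d : ℕ} (f : EuclideanSpace ℝ (Fin d) → ℝ)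
    (hfdiff : Differentiable ℝ f) (L : ℝ) (hL : 0 < L)
    (hflip : ∀ u w, ‖gradient f u - gradient f w‖ ≤ L * ‖u - w‖)
    (x v : EuclideanSpace ℝ (Fin d)) :
    |f (x + v) - f x - ⟪gradient f x, v⟫| ≤ L / 2 * ‖v‖ ^ 2 := by
  have hgradLip : LipschitzWith (Real.toNNReal L) (fun y => gradient f y) := by
    apply LipschitzWith.of_dist_le_mul
    intro u w
    simpa [dist_eq_norm, Real.coe_toNNReal _ hL.le] using hflip u w
  have hgradCont : Continuous (fun y => gradient f y) := hgradLip.continuous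
  set g : ℝ → ℝ := fun t => f (x + t • v) with hg
  have hgd : ∀ t : ℝ, HasDerivAt g (⟪gradient f (x + t • v), v⟫) t := by
    intro t
    have h1 : HasFDerivAt f ((InnerProductSpace.toDual ℝ _) (gradient f (x + t • v)))
        (x + t • v) := (hfdiff (x + t • v)).hasGradientAt.hasFDerivAt
    have h2 : HasDerivAt (fun t : ℝ => x + t • v) v t := by
      simpa using ((hasDerivAt_id t).smul_const v).const_add x
    exact h1.comp_hasDerivAt t h2
  have hcont : Continuous fun t : ℝ => ⟪gradient f (x + t • v), v⟫ := by
    exact (hgradCont.comp (by continuity)).inner continuous_const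
  have hftc : ∫ t in (0:ℝ)..1, ⟪gradient f (x + t • v), v⟫ = g 1 - g 0 := by
    exact intervalIntegral.integral_eq_sub_of_hasDerivAt (fun t _ => hgd t)
      (hcont.intervalIntegrable 0 1)
  have hconst : ∫ t in (0:ℝ)..1, ⟪gradient f x, v⟫ = ⟪gradient f x, v⟫ := by simp
  have hkey : f (x + v) - f x - ⟪gradient f x, v⟫
      = ∫ t in (0:ℝ)..1, ⟪gradient f (x + t • v) - gradient f x, v⟫ := by
    have : ∀ t : ℝ, ⟪gradient f (x + t • v) - gradient f x, v⟫
        = ⟪gradient f (x + t • v), v⟫ - ⟪gradient f x, v⟫ := fun t => by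
      rw [inner_sub_left]
    rw [intervalIntegral.integral_congr (fun t _ => this t),
      intervalIntegral.integral_sub (hcont.intervalIntegrable 0 1)
        (intervalIntegrable_const), hftc, hconst]
    simp [hg]
  rw [hkey]
  have hbound : ∀ t ∈ Set.uIcc (0:ℝ) 1,
      ‖⟪gradient f (x + t • v) - gradient f x, v⟫‖ ≤ L * ‖v‖ ^ 2 * t := by
    intro t ht
    rw [Set.uIcc_of_le (by norm_num)] at ht
    calc ‖⟪gradient f (x + t • v) - gradient f x, v⟫‖
        ≤ ‖gradient f (x + t • v) - gradient f x‖ * ‖v‖ := norm_inner_le_norm _ _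
      _ ≤ (L * ‖x + t • v - x‖) * ‖v‖ :=
          mul_le_mul_of_nonneg_right (hflip _ _) (norm_nonneg _)
      _ = L * ‖v‖ ^ 2 * t := by
          simp only [add_sub_cancel_left, norm_smul, Real.norm_eq_abs,
            abs_of_nonneg ht.1]
          ring
  have h1 : |∫ t in (0:ℝ)..1, ⟪gradient f (x + t • v) - gradient f x, v⟫|
      ≤ ∫ t in (0:ℝ)..1, |⟪gradient f (x + t • v) - gradient f x, v⟫| :=
    intervalIntegral.abs_integral_le_integral_abs (by norm_num)
  have h2 : (∫ t in (0:ℝ)..1, |⟪gradient f (x + t • v) - gradient f x, v⟫|)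
      ≤ ∫ t in (0:ℝ)..1, L * ‖v‖ ^ 2 * t := by
    have hcont2 : Continuous fun t : ℝ => ⟪gradient f (x + t • v) - gradient f x, v⟫ :=
      ((hgradCont.comp (by continuity)).sub continuous_const).inner continuous_const
    apply intervalIntegral.integral_mono_on (by norm_num)
    · exact hcont2.abs.intervalIntegrable 0 1
    · exact (continuous_const.mul continuous_id).intervalIntegrable 0 1
    · intro t ht
      have := hbound t (by rw [Set.uIcc_of_le (by norm_num)]; exact ht)
      simpa [Real.norm_eq_abs, inner_sub_left] using this
  have h3 : (∫ t in (0:ℝ)..1, L * ‖v‖ ^ 2 * t) = L / 2 * ‖v‖ ^ 2 := by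
    rw [intervalIntegral.integral_const_mul, integral_id]
    ring
  linarith [h1, h2]

theorem rdsa_bias
    (d : ℕ) (hd : 1 ≤ d)
    (f : EuclideanSpace ℝ (Fin d) → ℝ)
    (hfdiff : Differentiable ℝ f)
    (L : ℝ) (hL : 0 < L)
    (hflip : ∀ u w, ‖gradient f u - gradient f w‖ ≤ L * ‖u - w‖)
    (c : ℝ) (hc : 0 < c)
    (μ : Measure (EuclideanSpace ℝ (Fin d))) [IsProbabilityMeasure μ]
    (hmean : ∀ u : EuclideanSpace ℝ (Fin d), (∫ z, ⟪z, u⟫ • z ∂μ) = u)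
    (hM3 : Integrable (fun z : EuclideanSpace ℝ (Fin d) => ‖z‖ ^ 3) μ)
    (x : EuclideanSpace ℝ (Fin d)) :
    ‖(∫ z, ((f (x + c • z) - f x) / c) • z ∂μ) - gradient f x‖ ≤
      (c * L / 2) * ∫ z, ‖z‖ ^ 3 ∂μ := by
  set G := gradient f x with hG
  -- pointwise bound
  have hpt : ∀ z : EuclideanSpace ℝ (Fin d),
      ‖((f (x + c • z) - f x) / c - ⟪z, G⟫) • z‖ ≤ (c * L / 2) * ‖z‖ ^ 3 := by
    intro z
    have h := rdsa_taylor f hfdiff L hL hflip x (c • z)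
    have heq : (f (x + c • z) - f x) / c - ⟪z, G⟫
        = (f (x + c • z) - f x - ⟪G, c • z⟫) / c := by
      rw [real_inner_smul_right, real_inner_comm]
      field_simp
    have hnorm2 : ‖c • z‖ ^ 2 = c ^ 2 * ‖z‖ ^ 2 := by
      rw [norm_smul, Real.norm_eq_abs, abs_of_pos hc, mul_pow]
    have habs : |(f (x + c • z) - f x) / c - ⟪z, G⟫| ≤ (c * L / 2) * ‖z‖ ^ 2 := by
      rw [heq, abs_div, abs_of_pos hc, div_le_iff₀ hc]
      calc |f (x + c • z) - f x - ⟪G, c • z⟫| ≤ L / 2 * ‖c • z‖ ^ 2 := h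
        _ = (c * L / 2) * ‖z‖ ^ 2 * c := by rw [hnorm2]; ring
    calc ‖((f (x + c • z) - f x) / c - ⟪z, G⟫) • z‖
        = |(f (x + c • z) - f x) / c - ⟪z, G⟫| * ‖z‖ := by
          rw [norm_smul, Real.norm_eq_abs]
      _ ≤ ((c * L / 2) * ‖z‖ ^ 2) * ‖z‖ := by
          exact mul_le_mul_of_nonneg_right habs (norm_nonneg _)
      _ = (c * L / 2) * ‖z‖ ^ 3 := by ring
  have hfc : Continuous f := hfdiff.continuous
  have hcont1 : Continuous fun z : EuclideanSpace ℝ (Fin d) => ⟪z, G⟫ • z :=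
    by fun_prop
  have hcontg : Continuous fun z : EuclideanSpace ℝ (Fin d) =>
      ((f (x + c • z) - f x) / c - ⟪z, G⟫) • z := by
    refine Continuous.smul (f := fun z => (f (x + c • z) - f x) / c - ⟪z, G⟫) (g := id) ?_ continuous_id
    exact (((hfc.comp (continuous_const.add (continuous_id.const_smul c))).sub continuous_const).div_const c).sub
      (continuous_id.inner continuous_const)
  have hsq : Integrable (fun z : EuclideanSpace ℝ (Fin d) => ‖z‖ ^ 2) μ := by
    refine Integrable.mono' (hM3.add (integrable_const 1)) ?_ ?_
    · exact (continuous_norm.pow 2).aestronglyMeasurable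
    · refine Filter.Eventually.of_forall fun z => ?_
      rw [Real.norm_eq_abs, abs_of_nonneg (by positivity)]
      simp only [Pi.add_apply]
      nlinarith [norm_nonneg z, sq_nonneg (‖z‖ - 1), sq_nonneg ‖z‖]
  have hInt1 : Integrable (fun z : EuclideanSpace ℝ (Fin d) => ⟪z, G⟫ • z) μ := by
    refine Integrable.mono' (hsq.const_mul ‖G‖) hcont1.aestronglyMeasurable ?_
    refine Filter.Eventually.of_forall fun z => ?_
    rw [norm_smul]
    calc ‖⟪z, G⟫‖ * ‖z‖ ≤ (‖z‖ * ‖G‖) * ‖z‖ :=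
          mul_le_mul_of_nonneg_right (norm_inner_le_norm _ _) (norm_nonneg _)
      _ = ‖G‖ * ‖z‖ ^ 2 := by ring
  have hIntg : Integrable (fun z : EuclideanSpace ℝ (Fin d) =>
      ((f (x + c • z) - f x) / c - ⟪z, G⟫) • z) μ := by
    refine Integrable.mono' (hM3.const_mul (c * L / 2)) hcontg.aestronglyMeasurable ?_
    exact Filter.Eventually.of_forall hpt
  have hInt0 : Integrable (fun z : EuclideanSpace ℝ (Fin d) =>
      ((f (x + c • z) - f x) / c) • z) μ := by
    have heq : (fun z : EuclideanSpace ℝ (Fin d) => ((f (x + c • z) - f x) / c) • z)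
        = fun z => ((f (x + c • z) - f x) / c - ⟪z, G⟫) • z + ⟪z, G⟫ • z := by
      funext z; rw [sub_smul, sub_add_cancel]
    rw [heq]
    exact hIntg.add hInt1
  have hsplit : (∫ z, ((f (x + c • z) - f x) / c) • z ∂μ) - G
      = ∫ z, ((f (x + c • z) - f x) / c - ⟪z, G⟫) • z ∂μ := by
    have h1 : (∫ z, ((f (x + c • z) - f x) / c - ⟪z, G⟫) • z ∂μ)
        = (∫ z, ((f (x + c • z) - f x) / c) • z ∂μ) - ∫ z, ⟪z, G⟫ • z ∂μ := by
      simp_rw [sub_smul]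
      exact integral_sub hInt0 hInt1
    rw [h1, hmean G]
  rw [hsplit]
  calc ‖∫ z, ((f (x + c • z) - f x) / c - ⟪z, G⟫) • z ∂μ‖
      ≤ ∫ z, (c * L / 2) * ‖z‖ ^ 3 ∂μ :=
        norm_integral_le_of_norm_le (hM3.const_mul (c * L / 2))
          (Filter.Eventually.of_forall hpt)
    _ = (c * L / 2) * ∫ z, ‖z‖ ^ 3 ∂μ := integral_const_mul _ _
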